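/- arXiv:2602.07646 — 3 statements merged into one kernel-verified Lean document; each statement's English description precedes it below -/
import Mathlib

section
/- For every ordinal α, the relation ≤_α on X × T* is transitive: if (x,U) ≤_α (y,V) and (y,V) ≤_α (z,W), then (x,U) ≤_α (z,W). -/
noncomputable section

variable {G X : Type*} [TopologicalSpace G] [Group G] [IsTopologicalGroup G]
  [TopologicalSpace X] [MulAction G X] [ContinuousSMul G X]

/-- The closure of the partial orbit `U · x`. -/
def orbCl (U : Set G) (x : X) : Set X :=
  closure ((fun g : G => g • x) '' U)

/-- Hjorth's ordinal-indexed asymmetric relations `(x,U) ≤_α (y,V)`: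
`≤₀` is inclusion of orbit closures; `(x,U) ≤_{α+1} (y,V)` iff for every nonempty open
`U' ⊆ U` there is a nonempty open `V' ⊆ V` with `(y,V') ≤_α (x,U')`; limits are
conjunctions. -/
def hle (α : Ordinal) : X → Set G → X → Set G → Prop :=
  Ordinal.limitRecOn (motive := fun _ => X → Set G → X → Set G → Prop) α
    (fun x U y V => orbCl U x ⊆ orbCl V y)
    (fun _ ih x U y V =>
      ∀ U' : Set G, IsOpen U' → U'.Nonempty → U' ⊆ U →
        ∃ V' : Set G, IsOpen V' ∧ V'.Nonempty ∧ V' ⊆ V ∧ ih y V' x U')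
    (fun _ _ ih x U y V => ∀ β hβ, ih β hβ x U y V)

/-- For every ordinal `α` the relation `≤_α` on `X × T*` is transitive. -/
theorem hle_trans (α : Ordinal) (x y z : X) (U V W : Set G)
    (hU : IsOpen U) (hU' : U.Nonempty) (hV : IsOpen V) (hV' : V.Nonempty)
    (hW : IsOpen W) (hW' : W.Nonempty)
    (h₁ : hle α x U y V) (h₂ : hle α y V z W) :
    hle α x U z W := by

  induction α using Ordinal.limitRecOn generalizing x y z U V W with
  | zero =>
    simp only [hle, Ordinal.limitRecOn_zero] at *
    exact h₁.trans h₂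
  | add_one β ih =>
    simp only [hle, Ordinal.limitRecOn_add_one] at *
    intro U' hU'o hU'ne hU'sub
    obtain ⟨V', hV'o, hV'ne, hV'sub, hyx⟩ := h₁ U' hU'o hU'ne hU'sub
    obtain ⟨W', hW'o, hW'ne, hW'sub, hzy⟩ := h₂ V' hV'o hV'ne hV'sub
    exact ⟨W', hW'o, hW'ne, hW'sub,
      ih z y x W' V' U' hW'o hW'ne hV'o hV'ne hU'o hU'ne hzy hyx⟩
  | limit β hβ ih =>
    rw [hle, Ordinal.limitRecOn_limit _ _ _ _ hβ] at h₁ h₂ ⊢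
    intro γ hγ
    exact ih γ hγ x y z U V W hU hU' hV hV' hW hW' (h₁ γ hγ) (h₂ γ hγ)

end
end

section
/- For a limit ordinal λ, player II has a winning strategy in the game G^s(x,U,y,V,λ) if and only if player II has a winning strategy in G^s(x,U,y,V,β) for every ordinal β with 0 < β < λ. -/
noncomputable section

variable {G X : Type*} [TopologicalSpace G] [Group G] [IsTopologicalGroup G]
  [TopologicalSpace X] [MulAction G X] [ContinuousSMul G X]

/-- The state of the game `𝒢ˢ(x,U,y,V,α)` before a round: `z` records the side
(`true` for `x`, `false` for `y`) of the previous round (`z₋₁ = x`), `A` and `B`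
the previous open sets `A_{i-1}`, `B_{i-1}`, and `o` the previous ordinal `α_{i-1}`. -/
structure SState (G : Type u_1) where
  z : Bool
  A : Set G
  B : Set G
  o : Ordinal.{u_2}

/-- A move of player I in `𝒢ˢ`: a triple `(zᵢ, Aᵢ, αᵢ)`. -/
abbrev SMove (G : Type*) := Bool × Set G × Ordinal

/-- Interpretation of the side marker: `true ↦ x`, `false ↦ y`. -/
def pt (x y : X) (b : Bool) : X := if b then x else y

/-- Legality of player I's move `(zᵢ, Aᵢ, αᵢ)` at state `s`. -/
def slegalI (s : SState G) (m : SMove G) : Prop :=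
  m.2.2 < s.o ∧ IsOpen m.2.1 ∧ m.2.1.Nonempty ∧
    (if m.1 = s.z then m.2.1 ⊆ s.A else m.2.1 ⊆ s.B)

/-- Legality of player II's response `B'` to the move `m` at state `s`. -/
def slegalII (x y : X) (s : SState G) (m : SMove G) (B' : Set G) : Prop :=
  IsOpen B' ∧ B'.Nonempty ∧
    (if m.1 = s.z then B' ⊆ s.B else B' ⊆ s.A) ∧
    orbCl B' (pt x y (!m.1)) = orbCl m.2.1 (pt x y m.1)

/-- The state after a round. -/
def sStep (s : SState G) (m : SMove G) (B' : Set G) : SState G :=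
  ⟨m.1, m.2.1, B', m.2.2⟩

/-- The state reached after player I has played the (newest-first) history `h`
and player II has followed the strategy `σ`. -/
def sStateAfter (U V : Set G) (α : Ordinal) (σ : List (SMove G) → Set G) :
    List (SMove G) → SState G
  | [] => ⟨true, U, V, α⟩
  | m :: h => sStep (sStateAfter U V α σ h) m (σ (m :: h))

/-- All of player I's moves in the (newest-first) history were legal. -/
def sLegalHist (U V : Set G) (α : Ordinal) (σ : List (SMove G) → Set G) :
    List (SMove G) → Prop
  | [] => True
  | m :: h => sLegalHist U V α σ h ∧ slegalI (sStateAfter U V α σ h) m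

/-- `σ` is a winning strategy for player II in `𝒢ˢ(x,U,y,V,α)`: against any legal
play of player I, every response of `σ` is legal (the game terminates with player I
unable to move, since the ordinals strictly decrease). -/
def sWinning (x y : X) (U V : Set G) (α : Ordinal)
    (σ : List (SMove G) → Set G) : Prop :=
  ∀ (m : SMove G) (h : List (SMove G)), sLegalHist U V α σ (m :: h) →
    slegalII x y (sStateAfter U V α σ h) m (σ (m :: h))


lemma sStateAfter_cons (U V : Set G) (α : Ordinal) (σ : List (SMove G) → Set G)
    (m : SMove G) (h : List (SMove G)) :
    sStateAfter U V α σ (m :: h) = ⟨m.1, m.2.1, σ (m :: h), m.2.2⟩ := rfl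

lemma sLegalHist_transfer (U V : Set G) (α β : Ordinal)
    (σ τ : List (SMove G) → Set G) (l : List (SMove G))
    (hagree : ∀ l', l' ≠ [] → l' <:+ l → σ l' = τ l')
    (hord : ∀ m (h' : List (SMove G)), l = h' ++ [m] → m.2.2 < α → m.2.2 < β)
    (hl : sLegalHist U V α σ l) : sLegalHist U V β τ l := by
  induction l with
  | nil => trivial
  | cons m h ih =>
    obtain ⟨hh, hm⟩ := hl
    have hagree' : ∀ l', l' ≠ [] → l' <:+ h → σ l' = τ l' :=
      fun l' h1 h2 => hagree l' h1 (h2.trans (List.suffix_cons m h))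
    have hord' : ∀ m' (h' : List (SMove G)), h = h' ++ [m'] → m'.2.2 < α → m'.2.2 < β := by
      intro m' h' he
      exact hord m' (m :: h') (by simp [he])
    refine ⟨ih hagree' hord' hh, ?_⟩
    cases h with
    | nil =>
      obtain ⟨h1, h2, h3, h4⟩ := hm
      exact ⟨hord m [] rfl h1, h2, h3, h4⟩
    | cons m' t =>
      have hst : sStateAfter U V β τ (m' :: t) = sStateAfter U V α σ (m' :: t) := by
        rw [sStateAfter_cons, sStateAfter_cons,
          hagree (m' :: t) (by simp) ⟨[m], rfl⟩]
      rw [hst]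
      exact hm

lemma sLegalHist_first (U V : Set G) (α : Ordinal) (σ : List (SMove G) → Set G) :
    ∀ l : List (SMove G), sLegalHist U V α σ l →
      ∀ (m₀ : SMove G) (t : List (SMove G)), l = t ++ [m₀] → m₀.2.2 < α := by
  intro l
  induction l with
  | nil => intro _ m₀ t h; simp at h
  | cons m h ih =>
    intro hl m₀ t he
    cases t with
    | nil =>
      simp only [List.nil_append, List.cons.injEq] at he
      obtain ⟨rfl, rfl⟩ := he
      exact hl.2.1
    | cons m' t' =>
      simp only [List.cons_append, List.cons.injEq] at he
      exact ih hl.1 m₀ t' he.2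

/-- For a limit ordinal `α`, player II has a winning strategy in `𝒢ˢ(x,U,y,V,α)`
iff player II has a winning strategy in `𝒢ˢ(x,U,y,V,β)` for every `0 < β < α`. -/
theorem sWinning_limit (x y : X) (U V : Set G)
    (hU : IsOpen U) (hUne : U.Nonempty) (hV : IsOpen V) (hVne : V.Nonempty)
    (α : Ordinal) (hα : Order.IsSuccLimit α) :
    (∃ σ : List (SMove G) → Set G, sWinning x y U V α σ) ↔
      (∀ β : Ordinal, 0 < β → β < α →
        ∃ σ : List (SMove G) → Set G, sWinning x y U V β σ) := by
  constructor
  · rintro ⟨σ, hσ⟩ β hβ0 hβα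
    refine ⟨σ, fun m h hlegal => ?_⟩
    have hl' : sLegalHist U V α σ (m :: h) :=
      sLegalHist_transfer U V β α σ σ _ (fun _ _ _ => rfl)
        (fun m' h' _ hm' => hm'.trans hβα) hlegal
    have hw := hσ m h hl'
    cases h with
    | nil => exact hw
    | cons m' t => exact hw
  · intro H
    classical
    set F : Ordinal → List (SMove G) → Set G := fun β =>
      if hb : 0 < β ∧ β < α then (H β hb.1 hb.2).choose else fun _ => ∅ with hF
    have hFwin : ∀ β (h1 : 0 < β) (h2 : β < α), sWinning x y U V β (F β) := by
      intro β h1 h2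
      have : F β = (H β h1 h2).choose := by rw [hF]; simp [h1, h2]
      rw [this]
      exact (H β h1 h2).choose_spec
    set σ : List (SMove G) → Set G := fun l =>
      match l.getLast? with
      | some m => F (m.2.2 + 1) l
      | none => ∅ with hσdef
    refine ⟨σ, ?_⟩
    intro m h hlegal
    rcases (m :: h).eq_nil_or_concat' with h' | ⟨t, m₀, hsplit⟩
    · simp at h'
    have hm₀α : m₀.2.2 < α :=
      sLegalHist_first U V α σ (m :: h) hlegal m₀ t hsplit
    set β : Ordinal := m₀.2.2 + 1 with hβ
    have hself : m₀.2.2 < β := by rw [hβ, Ordinal.add_one_eq_succ]; exact Order.lt_succ _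
    have hβ0 : 0 < β := zero_le.trans_lt hself
    have hβα : β < α := by
      rw [hβ, Ordinal.add_one_eq_succ]
      exact hα.succ_lt hm₀α
    have hagree : ∀ l', l' ≠ [] → l' <:+ m :: h → σ l' = F β l' := by
      intro l' h1 ⟨p, hp⟩
      have hlast : l'.getLast? = some m₀ := by
        have : (p ++ l').getLast? = some m₀ := by rw [hp, hsplit]; exact List.getLast?_concat
        rwa [List.getLast?_append_of_ne_nil _ h1] at this
      rw [hσdef]
      simp only [hlast, hβ]
    have hlegβ : sLegalHist U V β (F β) (m :: h) := by
      refine sLegalHist_transfer U V α β σ (F β) _ hagree ?_ hlegal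
      intro m' h' he _
      have hm'' : some m' = some m₀ := by
        rw [← List.getLast?_concat (l := h'), ← he, hsplit, List.getLast?_concat]
      obtain rfl : m' = m₀ := by injection hm''
      exact hself
    have hw := hFwin β hβ0 hβα m h hlegβ
    rw [← hagree (m :: h) (by simp) List.suffix_rfl] at hw
    cases h with
    | nil => exact hw
    | cons m' t' =>
      have hst : sStateAfter U V β (F β) (m' :: t') = sStateAfter U V α σ (m' :: t') := by
        rw [sStateAfter_cons, sStateAfter_cons,
          hagree (m' :: t') (by simp) (List.suffix_cons m (m' :: t'))]
      rwa [hst] at hw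


end
end

section
/- For all L-structures M, N, tuples a from M and b from N of equal length, and all ordinals α: H^α_{M,a} = H^α_{N,b} if and only if (M,a) ∼_α (N,b), where ∼_α is the standard back-and-forth hierarchy. -/
noncomputable section

open scoped Classical

/-- A (single-sorted, finitary) signature: function, relation and constant symbols. -/
structure Sig : Type 1 where
  Func : ℕ → Type
  Rel : ℕ → Type
  Const : Type

/-- A `σ`-structure on a carrier `M`: interpretations of all symbols. -/
structure Str (σ : Sig) (M : Type) : Type where
  fn : ∀ {k : ℕ}, σ.Func k → (Fin k → M) → M
  rel : ∀ {k : ℕ}, σ.Rel k → (Fin k → M) → Prop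
  cst : σ.Const → M

/-- The record of truth values of all unnested atomic formulas under all assignments
of their (finitely many) variables into an `n`-tuple: the components record the truth
values of the unnested atomic formulas `vᵢ = vⱼ`, `vᵢ = c`, `R(v̄)` and `f(v̄) = vᵢ`. -/
structure UAInv (σ : Sig) (n : ℕ) : Type where
  eqv : Fin n → Fin n → Prop
  cst : σ.Const → Fin n → Prop
  rel : ∀ k : ℕ, σ.Rel k → (Fin k → Fin n) → Prop
  fnc : ∀ k : ℕ, σ.Func k → (Fin k → Fin n) → Fin n → Prop

/-- `I_{M,ā}`: the truth values in `M` of all unnested atomic formulas with variables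
interpreted by entries of the tuple `ā`. -/
def uaInv {σ : Sig} {M : Type} (I : Str σ M) {n : ℕ} (a : Fin n → M) : UAInv σ n where
  eqv i j := a i = a j
  cst c i := a i = I.cst c
  rel _ R g := I.rel R (fun i => a (g i))
  fnc _ f g i := I.fn f (fun j => a (g j)) = a i

/-- The back-and-forth hierarchy `(M,ā) ∼_α (N,b̄)` (for the qualifying pair
`(μ,λ) = (ω,ω)`: finite tuples, extensions by finite tuples): `∼₀` means the map
`ā ↦ b̄` is a partial isomorphism (the two tuples satisfy the same unnested atomic
formulas); `(M,ā) ∼_{α+1} (N,b̄)` iff every finite tuple extension on either side can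
be matched on the other side preserving `∼_α`; limits are conjunctions. -/
def Sim {σ : Sig} {M N : Type} (IM : Str σ M) (IN : Str σ N) (α : Ordinal) :
    ∀ n : ℕ, (Fin n → M) → (Fin n → N) → Prop :=
  Ordinal.limitRecOn (motive := fun _ => ∀ n : ℕ, (Fin n → M) → (Fin n → N) → Prop) α
    (fun _ a b => uaInv IM a = uaInv IN b)
    (fun _ ih n a b =>
      (∀ (m : ℕ) (c : Fin m → M), ∃ d : Fin m → N,
        ih (n + m) (Fin.append a c) (Fin.append b d)) ∧
      (∀ (m : ℕ) (d : Fin m → N), ∃ c : Fin m → M,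
        ih (n + m) (Fin.append a c) (Fin.append b d)))
    (fun _ _ ih n a b => ∀ β hβ, ih β hβ n a b)

/-- A point of the domain of the invariant functions `H^α_{M,ā}` (besides the
`I_{M,ā}` part): a structure `K` together with a tuple `s̄t̄` of length `n + m`
(`s̄` of the length `n` of `ā` and `t̄` of finite length `m`). -/
structure HKey (σ : Sig) (n : ℕ) : Type 1 where
  K : Type
  IK : Str σ K
  m : ℕ
  st : Fin (n + m) → K

/-- The invariant functions `H^α_{M,ā}`, represented as the pair consisting of
`I_{M,ā}` together with the map sending `((K, s̄t̄), β)` with `β < α` to the value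
(`some true`/`some false` for `1`/`0`) of `H^α_{M,ā}(K, s̄t̄, β)`, and `none` outside
the domain.  `H^{β+1}_{M,ā}(K, s̄t̄, β) = 1` iff there is a tuple `c̄` in `M` of the
length of `t̄` with `H^β_{M,āc̄} = H^β_{K,s̄t̄}`; the restriction property
`H^α_{M,ā} ↾ β = H^β_{M,ā}` holds by construction. -/
noncomputable def Hfun {σ : Sig} (α : Ordinal) {M : Type} (IM : Str σ M) {n : ℕ}
    (a : Fin n → M) : UAInv σ n × (HKey σ n × Ordinal → Option Bool) :=
  ⟨uaInv IM a,
    fun q =>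
      if h : q.2 < α then
        some (if (∃ c : Fin q.1.m → M,
            Hfun q.2 IM (Fin.append a c) = Hfun q.2 q.1.IK q.1.st) then true else false)
      else none⟩
termination_by α
decreasing_by all_goals exact h
section Aux
variable {σ : Sig} {M N : Type}

lemma bool_ite_eq_iff (P Q : Prop) [Decidable P] [Decidable Q] :
    (if P then true else false) = (if Q then true else false) ↔ (P ↔ Q) := by
  by_cases hP : P <;> by_cases hQ : Q <;> simp [hP, hQ]

lemma Hfun_fst (α : Ordinal) (IM : Str σ M) {n : ℕ} (a : Fin n → M) :
    (Hfun α IM a).1 = uaInv IM a := by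
  rw [Hfun]

lemma Hfun_snd (α : Ordinal) (IM : Str σ M) {n : ℕ} (a : Fin n → M)
    (q : HKey σ n × Ordinal) :
    (Hfun α IM a).2 q =
      if _ : q.2 < α then
        some (if (∃ c : Fin q.1.m → M,
            Hfun q.2 IM (Fin.append a c) = Hfun q.2 q.1.IK q.1.st) then true else false)
      else none := by
  conv_lhs => rw [Hfun]

end Aux

section Main
variable {σ : Sig} {M N : Type}

lemma Hfun_eq_iff (IM : Str σ M) (IN : Str σ N) (α : Ordinal) {n : ℕ}
    (a : Fin n → M) (b : Fin n → N) :
    Hfun α IM a = Hfun α IN b ↔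
      uaInv IM a = uaInv IN b ∧
      ∀ β < α, ∀ (K : Type) (IK : Str σ K) (m : ℕ) (st : Fin (n + m) → K),
        ((∃ c : Fin m → M, Hfun β IM (Fin.append a c) = Hfun β IK st) ↔
         (∃ d : Fin m → N, Hfun β IN (Fin.append b d) = Hfun β IK st)) := by
  rw [Prod.ext_iff]
  constructor
  · rintro ⟨h1, h2⟩
    refine ⟨by rwa [Hfun_fst, Hfun_fst] at h1, ?_⟩
    intro β hβ K IK m st
    have h := congrFun h2 ⟨⟨K, IK, m, st⟩, β⟩
    rw [Hfun_snd, Hfun_snd, dif_pos hβ, dif_pos hβ] at h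
    exact (bool_ite_eq_iff _ _).1 (Option.some_injective _ h)
  · rintro ⟨h1, h2⟩
    refine ⟨by rw [Hfun_fst, Hfun_fst]; exact h1, ?_⟩
    funext q
    obtain ⟨⟨K, IK, m, st⟩, β⟩ := q
    rw [Hfun_snd, Hfun_snd]
    by_cases hβ : β < α
    · rw [dif_pos hβ, dif_pos hβ]
      exact congrArg some ((bool_ite_eq_iff _ _).2 (h2 β hβ K IK m st))
    · rw [dif_neg hβ, dif_neg hβ]

lemma Hfun_mono {IM : Str σ M} {IN : Str σ N} {α β : Ordinal} (hβ : β ≤ α) {n : ℕ}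
    {a : Fin n → M} {b : Fin n → N} (h : Hfun α IM a = Hfun α IN b) :
    Hfun β IM a = Hfun β IN b := by
  rw [Hfun_eq_iff] at h ⊢
  exact ⟨h.1, fun γ hγ => h.2 γ (lt_of_lt_of_le hγ hβ)⟩

lemma uaInv_append_eq {IM : Str σ M} {IN : Str σ N} {n m : ℕ}
    {a : Fin n → M} {b : Fin n → N} {c : Fin m → M} {d : Fin m → N}
    (h : uaInv IM (Fin.append a c) = uaInv IN (Fin.append b d)) :
    uaInv IM a = uaInv IN b := by
  have h1 := congrArg UAInv.eqv h
  have h2 := congrArg UAInv.cst h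
  have h3 := congrArg UAInv.rel h
  have h4 := congrArg UAInv.fnc h
  show UAInv.mk _ _ _ _ = UAInv.mk _ _ _ _
  simp only [UAInv.mk.injEq]
  refine ⟨?_, ?_, ?_, ?_⟩
  · funext i j
    have := congrFun (congrFun h1 (Fin.castAdd m i)) (Fin.castAdd m j)
    simpa [uaInv, Fin.append_left] using this
  · funext cc i
    have := congrFun (congrFun h2 cc) (Fin.castAdd m i)
    simpa [uaInv, Fin.append_left] using this
  · funext k R g
    have := congrFun (congrFun (congrFun h3 k) R) (fun i => Fin.castAdd m (g i))
    simpa [uaInv, Fin.append_left] using this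
  · funext k f g i
    have := congrFun (congrFun (congrFun (congrFun h4 k) f)
      (fun j => Fin.castAdd m (g j))) (Fin.castAdd m i)
    simpa [uaInv, Fin.append_left] using this

lemma Sim_zero (IM : Str σ M) (IN : Str σ N) {n : ℕ} (a : Fin n → M) (b : Fin n → N) :
    Sim IM IN 0 n a b ↔ uaInv IM a = uaInv IN b := by
  simp only [Sim, Ordinal.limitRecOn_zero]

lemma Sim_succ (IM : Str σ M) (IN : Str σ N) (β : Ordinal) {n : ℕ}
    (a : Fin n → M) (b : Fin n → N) :
    Sim IM IN (Order.succ β) n a b ↔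
      (∀ (m : ℕ) (c : Fin m → M), ∃ d : Fin m → N,
        Sim IM IN β (n + m) (Fin.append a c) (Fin.append b d)) ∧
      (∀ (m : ℕ) (d : Fin m → N), ∃ c : Fin m → M,
        Sim IM IN β (n + m) (Fin.append a c) (Fin.append b d)) := by
  simp only [Sim, Ordinal.limitRecOn_succ]

lemma Sim_limit (IM : Str σ M) (IN : Str σ N) {α : Ordinal} (hα : Order.IsSuccLimit α) {n : ℕ}
    (a : Fin n → M) (b : Fin n → N) :
    Sim IM IN α n a b ↔ ∀ β < α, Sim IM IN β n a b := by
  simp only [Sim, Ordinal.limitRecOn_limit _ _ _ _ hα]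

lemma key (σ : Sig) (α : Ordinal) :
    ∀ {M N : Type} (IM : Str σ M) (IN : Str σ N) (n : ℕ)
      (a : Fin n → M) (b : Fin n → N),
      Hfun α IM a = Hfun α IN b ↔ Sim IM IN α n a b := by
  induction α using Ordinal.induction with
  | _ α IH =>
  intro M N IM IN n a b
  rcases Ordinal.zero_or_succ_or_isSuccLimit α with h0 | ⟨β, hs⟩ | hl
  · subst h0
    rw [Sim_zero, Hfun_eq_iff]
    exact ⟨fun h => h.1, fun h => ⟨h, fun β hβ => absurd hβ (not_lt_zero (a := β))⟩⟩
  · subst hs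
    have hβα : β < Order.succ β := Order.lt_succ β
    rw [Sim_succ, Hfun_eq_iff]
    constructor
    · rintro ⟨h1, h2⟩
      constructor
      · intro m c
        obtain ⟨d, hd⟩ := (h2 β hβα M IM m (Fin.append a c)).1 ⟨c, rfl⟩
        exact ⟨d, (IH β hβα _ _ _ _ _).1 hd.symm⟩
      · intro m d
        obtain ⟨c, hc⟩ := (h2 β hβα N IN m (Fin.append b d)).2 ⟨d, rfl⟩
        exact ⟨c, (IH β hβα _ _ _ _ _).1 hc⟩
    · rintro ⟨h1, h2⟩
      have base : uaInv IM a = uaInv IN b := by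
        obtain ⟨d, hd⟩ := h1 0 Fin.elim0
        have := (IH β hβα _ _ _ _ _).2 hd
        exact uaInv_append_eq ((Hfun_eq_iff _ _ _ _ _).1 this).1
      refine ⟨base, ?_⟩
      intro γ hγ K IK m st
      have hγβ : γ ≤ β := Order.lt_succ_iff.mp hγ
      constructor
      · rintro ⟨c, hc⟩
        obtain ⟨d, hd⟩ := h1 m c
        have hH := Hfun_mono hγβ ((IH β hβα _ _ _ _ _).2 hd)
        exact ⟨d, hH.symm.trans hc⟩
      · rintro ⟨d, hd⟩
        obtain ⟨c, hc⟩ := h2 m d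
        have hH := Hfun_mono hγβ ((IH β hβα _ _ _ _ _).2 hc)
        exact ⟨c, hH.trans hd⟩
  · rw [Sim_limit _ _ hl]
    constructor
    · intro h β hβ
      exact (IH β hβ _ _ _ _ _).1 (Hfun_mono hβ.le h)
    · intro h
      rw [Hfun_eq_iff]
      have base : uaInv IM a = uaInv IN b := by
        have := h 0 hl.pos
        rwa [Sim_zero] at this
      refine ⟨base, ?_⟩
      intro γ hγ K IK m st
      have hsucc : Order.succ γ < α := hl.succ_lt hγ
      have hH := (IH _ hsucc IM IN n a b).2 (h _ hsucc)
      exact ((Hfun_eq_iff _ _ _ _ _).1 hH).2 γ (Order.lt_succ γ) K IK m st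

end Main

/-- For all `σ`-structures `M, N`, tuples `ā`, `b̄` of equal length and all ordinals
`α`: `H^α_{M,ā} = H^α_{N,b̄}` iff `(M,ā) ∼_α (N,b̄)`. -/
theorem Hfun_eq_iff_Sim {σ : Sig} {M N : Type} (IM : Str σ M) (IN : Str σ N)
    (α : Ordinal) (n : ℕ) (a : Fin n → M) (b : Fin n → N) :
    Hfun α IM a = Hfun α IN b ↔ Sim IM IN α n a b := by
  exact key σ α IM IN n a b

end
end
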